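/- The multinomial logistic loss ℓ(w) = -∑_{i∈S} y_i log(exp(x_i^⊤ w)/(v_0 + ∑_{j∈S} exp(x_j^⊤ w))), where v_0 > 0, y_i ∈ {0,1}, and each ‖x_i‖₂ ≤ 1, is a 3√2-self-concordant-like function: for any w, δ ∈ ℝ^d, letting ψ(s) = ℓ(w + sδ), one has |ψ'''(s)| ≤ 3√2 ‖δ‖₂ ψ''(s). -/

import Mathlib

open scoped RealInnerProductSpace

lemma cube_abs (E r : ℝ) (hE : 0 ≤ E) : |E * r^3| = E * (r^2 * |r|) := by
  rw [abs_mul, abs_of_nonneg hE, abs_pow, pow_succ, sq_abs]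

set_option maxHeartbeats 1600000 in
lemma key_aux {ι : Type*} (S : Finset ι) (v0 : ℝ) (hv0 : 0 < v0)
    (a b : ι → ℝ) (B : ℝ) (hB0 : 0 ≤ B) (hB : ∀ j ∈ S, |b j| ≤ B)
    (c C0 C1 : ℝ) (hc : 0 ≤ c) (ψ : ℝ → ℝ)
    (hψ : ψ = fun s => C0 + C1 * s +
      c * Real.log (v0 + ∑ j ∈ S, Real.exp (a j + s * b j))) (s : ℝ) :
    0 ≤ iteratedDeriv 2 ψ s ∧
    |iteratedDeriv 3 ψ s| ≤ 2 * B * iteratedDeriv 2 ψ s := by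
  set E : ι → ℝ → ℝ := fun j u => Real.exp (a j + u * b j) with hEdef
  set g : ℝ → ℝ := fun u => v0 + ∑ j ∈ S, E j u with hgdef
  set g1 : ℝ → ℝ := fun u => ∑ j ∈ S, b j * E j u with hg1def
  set g2 : ℝ → ℝ := fun u => ∑ j ∈ S, (b j)^2 * E j u with hg2def
  set g3 : ℝ → ℝ := fun u => ∑ j ∈ S, (b j)^3 * E j u with hg3def
  have hE : ∀ j, ∀ t : ℝ, HasDerivAt (E j) (b j * E j t) t := by
    intro j t
    have h1 : HasDerivAt (fun u : ℝ => a j + u * b j) (b j) t :=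
      (hasDerivAt_mul_const (b j)).const_add (a j)
    simpa [hEdef, mul_comm] using h1.exp
  have hgpos : ∀ t : ℝ, 0 < g t := fun t =>
    add_pos_of_pos_of_nonneg hv0 (Finset.sum_nonneg fun j _ => (Real.exp_pos _).le)
  have hg : ∀ t : ℝ, HasDerivAt g (g1 t) t := fun t =>
    (HasDerivAt.fun_sum fun j _ => hE j t).const_add v0
  have hg1 : ∀ t : ℝ, HasDerivAt g1 (g2 t) t := by
    intro t
    refine HasDerivAt.fun_sum fun j _ => ?_
    have := (hE j t).const_mul (b j)
    convert this using 1
    · rfl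
    ring
  have hg2 : ∀ t : ℝ, HasDerivAt g2 (g3 t) t := by
    intro t
    refine HasDerivAt.fun_sum fun j _ => ?_
    have := (hE j t).const_mul ((b j)^2)
    convert this using 1
    · rfl
    ring
  have hψ1 : ∀ t : ℝ, HasDerivAt ψ (C1 + c * (g1 t / g t)) t := by
    intro t
    rw [hψ]
    have hlog : HasDerivAt (fun u => Real.log (g u)) (g1 t / g t) t :=
      (hg t).log (hgpos t).ne'
    have h1 : HasDerivAt (fun u : ℝ => C1 * u) C1 t := by
      simpa using (hasDerivAt_id t).const_mul C1
    exact ((h1.const_add C0).add (hlog.const_mul c)).congr_deriv (by ring)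
  have hψ2 : ∀ t : ℝ, HasDerivAt (fun u => C1 + c * (g1 u / g u))
      (c * ((g2 t * g t - g1 t * g1 t) / (g t) ^ 2)) t := by
    intro t
    exact (((hg1 t).div (hg t) (hgpos t).ne').const_mul c).const_add C1
  have hψ3 : HasDerivAt (fun u => c * ((g2 u * g u - g1 u * g1 u) / (g u) ^ 2))
      (c * ((g3 s * (g s)^2 - 3 * (g1 s * (g2 s * g s)) + 2 * (g1 s)^3) / (g s)^3)) s := by
    have h := ((((hg2 s).mul (hg s)).sub ((hg1 s).mul (hg1 s))).div
      ((hg s).pow 2) (pow_ne_zero 2 (hgpos s).ne')).const_mul c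
    convert h using 1
    · rfl
    · rfl
    · rfl
    have hne : g s ≠ 0 := (hgpos s).ne'
    simp only [Pi.pow_apply, Pi.sub_apply, Pi.mul_apply]
    field_simp
    ring
  have e1 : deriv ψ = fun u => C1 + c * (g1 u / g u) := funext fun t => (hψ1 t).deriv
  have e2 : deriv (deriv ψ) = fun u => c * ((g2 u * g u - g1 u * g1 u) / (g u) ^ 2) := by
    rw [e1]; exact funext fun t => (hψ2 t).deriv
  have e3 : iteratedDeriv 2 ψ s = c * ((g2 s * g s - g1 s * g1 s) / (g s) ^ 2) := by
    rw [show (2:ℕ) = 0 + 1 + 1 from rfl, iteratedDeriv_succ, iteratedDeriv_succ,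
      iteratedDeriv_zero, e2]
  have e4 : iteratedDeriv 3 ψ s =
      c * ((g3 s * (g s)^2 - 3 * (g1 s * (g2 s * g s)) + 2 * (g1 s)^3) / (g s)^3) := by
    rw [show (3:ℕ) = 0 + 1 + 1 + 1 from rfl, iteratedDeriv_succ, iteratedDeriv_succ,
      iteratedDeriv_succ, iteratedDeriv_zero, e2]
    exact hψ3.deriv
  -- the measure-theoretic identities
  set m : ℝ := g1 s / g s with hmdef
  have hGpos := hgpos s
  have hGne := hGpos.ne'
  have hsumE : ∑ j ∈ S, E j s = g s - v0 := by
    have : g s = v0 + ∑ j ∈ S, E j s := rfl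
    linarith
  have hs2 : ∑ j ∈ S, E j s * (b j - m)^2
      = g2 s - 2*m*g1 s + m^2*(g s - v0) := by
    rw [Finset.sum_congr rfl (fun j _ => show E j s * (b j - m)^2
      = (b j)^2 * E j s - 2*m*(b j * E j s) + m^2 * E j s from by ring)]
    rw [Finset.sum_add_distrib, Finset.sum_sub_distrib, ← Finset.mul_sum,
      ← Finset.mul_sum, hsumE]
  have hs3 : ∑ j ∈ S, E j s * (b j - m)^3
      = g3 s - 3*m*g2 s + 3*m^2*g1 s - m^3*(g s - v0) := by
    rw [Finset.sum_congr rfl (fun j _ => show E j s * (b j - m)^3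
      = (b j)^3 * E j s - 3*m*((b j)^2 * E j s) + 3*m^2*(b j * E j s) - m^3 * E j s from by ring)]
    rw [Finset.sum_sub_distrib, Finset.sum_add_distrib, Finset.sum_sub_distrib,
      ← Finset.mul_sum, ← Finset.mul_sum, ← Finset.mul_sum, hsumE]
  set Q : ℝ := (∑ j ∈ S, E j s * (b j - m)^2) + v0 * m^2 with hQdef
  set P : ℝ := (∑ j ∈ S, E j s * (b j - m)^3) - v0 * m^3 with hPdef
  have hVid : (g2 s * g s - g1 s * g1 s) / (g s) ^ 2 = Q / g s := by
    rw [hQdef, hs2, hmdef]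
    field_simp
    ring
  have hTid : (g3 s * (g s)^2 - 3 * (g1 s * (g2 s * g s)) + 2 * (g1 s)^3) / (g s)^3
      = P / g s := by
    rw [hPdef, hs3, hmdef]
    field_simp
    ring
  have hQnn : 0 ≤ Q := by
    apply add_nonneg
    · exact Finset.sum_nonneg fun j _ => mul_nonneg (Real.exp_pos _).le (sq_nonneg _)
    · exact mul_nonneg hv0.le (sq_nonneg m)
  -- |m| ≤ B
  have hg1abs : |g1 s| ≤ B * (g s - v0) := by
    have h0 : g1 s = ∑ j ∈ S, b j * E j s := rfl
    have ha : |∑ j ∈ S, b j * E j s| ≤ ∑ j ∈ S, |b j * E j s| :=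
      Finset.abs_sum_le_sum_abs _ _
    have hb : ∑ j ∈ S, |b j * E j s| ≤ ∑ j ∈ S, B * E j s := by
      refine Finset.sum_le_sum fun j hj => ?_
      rw [abs_mul, abs_of_pos (Real.exp_pos _)]
      exact mul_le_mul_of_nonneg_right (hB j hj) (Real.exp_pos _).le
    have hcc : ∑ j ∈ S, B * E j s = B * (g s - v0) := by
      rw [← Finset.mul_sum, hsumE]
    rw [h0]
    linarith
  have hmB : |m| ≤ B := by
    have h1 : |m| = |g1 s| / g s := by rw [hmdef, abs_div, abs_of_pos hGpos]
    rw [h1, div_le_iff₀ hGpos]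
    have h2 : B * (g s - v0) = B * g s - B * v0 := by ring
    have h3 : 0 ≤ B * v0 := mul_nonneg hB0 hv0.le
    linarith
  have hPQ : |P| ≤ 2 * B * Q := by
    have h1 : |∑ j ∈ S, E j s * (b j - m)^3| ≤ 2 * B * ∑ j ∈ S, E j s * (b j - m)^2 := by
      calc |∑ j ∈ S, E j s * (b j - m)^3| ≤ ∑ j ∈ S, |E j s * (b j - m)^3| :=
            Finset.abs_sum_le_sum_abs _ _
        _ ≤ ∑ j ∈ S, 2 * B * (E j s * (b j - m)^2) := by
            refine Finset.sum_le_sum fun j hj => ?_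
            have hEeq : E j s = Real.exp (a j + s * b j) := rfl
            rw [cube_abs _ _ (Real.exp_pos _).le, ← hEeq]
            have h2 : |b j - m| ≤ 2 * B := by
              calc |b j - m| ≤ |b j| + |m| := abs_sub _ _
                _ ≤ 2 * B := by linarith [hB j hj, hmB]
            have hx : 0 ≤ E j s * (b j - m)^2 :=
              mul_nonneg (Real.exp_pos _).le (sq_nonneg _)
            calc E j s * ((b j - m)^2 * |b j - m|)
                = (E j s * (b j - m)^2) * |b j - m| := by ring
              _ ≤ (E j s * (b j - m)^2) * (2 * B) := mul_le_mul_of_nonneg_left h2 hx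
              _ = 2 * B * (E j s * (b j - m)^2) := by ring
        _ = 2 * B * ∑ j ∈ S, E j s * (b j - m)^2 := by rw [Finset.mul_sum]
    have h2 : |v0 * m^3| ≤ 2 * B * (v0 * m^2) := by
      rw [cube_abs _ _ hv0.le]
      have hx : 0 ≤ v0 * m^2 := mul_nonneg hv0.le (sq_nonneg _)
      have hm2 : |m| ≤ 2 * B := by linarith [hmB]
      calc v0 * (m^2 * |m|) = (v0 * m^2) * |m| := by ring
        _ ≤ (v0 * m^2) * (2 * B) := mul_le_mul_of_nonneg_left hm2 hx
        _ = 2 * B * (v0 * m^2) := by ring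
    calc |P| ≤ |∑ j ∈ S, E j s * (b j - m)^3| + |v0 * m^3| := abs_sub _ _
      _ ≤ 2 * B * ∑ j ∈ S, E j s * (b j - m)^2 + 2 * B * (v0 * m^2) := by
          linarith
      _ = 2 * B * Q := by rw [hQdef]; ring
  rw [e3, e4, hVid, hTid]
  constructor
  · exact mul_nonneg hc (div_nonneg hQnn hGpos.le)
  · rw [abs_mul, abs_of_nonneg hc, abs_div, abs_of_pos hGpos]
    have key : c * |P| ≤ c * (2 * B * Q) := mul_le_mul_of_nonneg_left hPQ hc
    calc c * (|P| / g s) = (c * |P|) / g s := by ring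
      _ ≤ (c * (2 * B * Q)) / g s := (div_le_div_iff_of_pos_right hGpos).mpr key
      _ = 2 * B * (c * (Q / g s)) := by ring


theorem stmt_2 {d : ℕ} {ι : Type*} (S : Finset ι) (v0 : ℝ) (hv0 : 0 < v0)
    (x : ι → EuclideanSpace ℝ (Fin d)) (y : ι → ℝ)
    (hx : ∀ i ∈ S, ‖x i‖ ≤ 1) (hy : ∀ i ∈ S, y i = 0 ∨ y i = 1)
    (ℓ : EuclideanSpace ℝ (Fin d) → ℝ)
    (hℓ : ∀ w, ℓ w = -∑ i ∈ S, y i *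
      Real.log (Real.exp ⟪x i, w⟫ / (v0 + ∑ j ∈ S, Real.exp ⟪x j, w⟫)))
    (w δ : EuclideanSpace ℝ (Fin d)) (ψ : ℝ → ℝ)
    (hψ : ∀ s, ψ s = ℓ (w + s • δ)) (s : ℝ) :
    |iteratedDeriv 3 ψ s| ≤ 3 * Real.sqrt 2 * ‖δ‖ * iteratedDeriv 2 ψ s := by
  set a : ι → ℝ := fun i => ⟪x i, w⟫ with hadef
  set b : ι → ℝ := fun i => ⟪x i, δ⟫ with hbdef
  have hψ' : ψ = fun t => (-∑ i ∈ S, y i * a i) + (-∑ i ∈ S, y i * b i) * t +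
      (∑ i ∈ S, y i) * Real.log (v0 + ∑ j ∈ S, Real.exp (a j + t * b j)) := by
    funext t
    rw [hψ, hℓ]
    have hinner : ∀ j : ι, ⟪x j, w + t • δ⟫ = a j + t * b j := by
      intro j
      rw [inner_add_right, real_inner_smul_right]
    have hgpos : 0 < v0 + ∑ j ∈ S, Real.exp (a j + t * b j) :=
      add_pos_of_pos_of_nonneg hv0 (Finset.sum_nonneg fun j _ => (Real.exp_pos _).le)
    have hterm : ∀ i ∈ S, y i * Real.log (Real.exp ⟪x i, w + t • δ⟫ /
        (v0 + ∑ j ∈ S, Real.exp ⟪x j, w + t • δ⟫))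
        = y i * (a i + t * b i) -
          y i * Real.log (v0 + ∑ j ∈ S, Real.exp (a j + t * b j)) := by
      intro i hi
      simp only [hinner]
      rw [Real.log_div (Real.exp_pos _).ne' hgpos.ne', Real.log_exp]
      ring
    rw [Finset.sum_congr rfl hterm, Finset.sum_sub_distrib, ← Finset.sum_mul]
    have hsplit : ∑ i ∈ S, y i * (a i + t * b i)
        = ∑ i ∈ S, y i * a i + t * ∑ i ∈ S, y i * b i := by
      rw [Finset.mul_sum, ← Finset.sum_add_distrib]
      exact Finset.sum_congr rfl fun i _ => by ring
    rw [hsplit]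
    ring
  have hc : 0 ≤ ∑ i ∈ S, y i := Finset.sum_nonneg fun i hi => by
    rcases hy i hi with h | h <;> simp [h]
  have hB : ∀ j ∈ S, |b j| ≤ ‖δ‖ := by
    intro j hj
    calc |b j| ≤ ‖x j‖ * ‖δ‖ := abs_real_inner_le_norm _ _
      _ ≤ 1 * ‖δ‖ := mul_le_mul_of_nonneg_right (hx j hj) (norm_nonneg δ)
      _ = ‖δ‖ := one_mul _
  obtain ⟨h2, h3⟩ := key_aux S v0 hv0 a b ‖δ‖ (norm_nonneg δ) hB
    (∑ i ∈ S, y i) (-∑ i ∈ S, y i * a i) (-∑ i ∈ S, y i * b i) hc ψ hψ' s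
  have hsqrt : (1:ℝ) ≤ Real.sqrt 2 := by
    rw [show (1:ℝ) = Real.sqrt 1 from Real.sqrt_one.symm]
    exact Real.sqrt_le_sqrt (by norm_num)
  calc |iteratedDeriv 3 ψ s| ≤ 2 * ‖δ‖ * iteratedDeriv 2 ψ s := h3
    _ ≤ 3 * Real.sqrt 2 * ‖δ‖ * iteratedDeriv 2 ψ s := by
        apply mul_le_mul_of_nonneg_right _ h2
        nlinarith [norm_nonneg δ]
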